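/- arXiv:math/0611823 — 7 statements merged into one kernel-verified Lean document; each statement's English description precedes it below -/
import Mathlib

section
/- Let α ∈ (0, π/4) and let k be a positive integer with k ≤ (cot²(α)-1)² / (2cot²(α)-1). Then the function T_k(s) = s + k·v(s), where v(s) = π + 2·arctan( sin(s)/(cos(s)+cot²(α)) ), is strictly increasing on [0, π]. -/
open Real Set

set_option maxHeartbeats 1000000 in
theorem stmt_5 (α : ℝ) (hα : α ∈ Set.Ioo 0 (π / 4)) (k : ℕ) (hk : 0 < k)
    (hkle : (k : ℝ) ≤ ((Real.cot α) ^ 2 - 1) ^ 2 / (2 * (Real.cot α) ^ 2 - 1))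
    (v T : ℝ → ℝ)
    (hv : ∀ s, v s = π + 2 * Real.arctan (Real.sin s / (Real.cos s + (Real.cot α) ^ 2)))
    (hT : ∀ s, T s = s + k * v s) :
    StrictMonoOn T (Set.Icc 0 π) := by
  obtain ⟨hα0, hα4⟩ := hα
  set c : ℝ := (Real.cot α) ^ 2 with hc_def
  have hπ : (0:ℝ) < π := Real.pi_pos
  have hsin : 0 < Real.sin α := Real.sin_pos_of_pos_of_lt_pi hα0 (by nlinarith)
  have hsc : Real.sin α < Real.cos α := by
    have h1 : Real.cos α = Real.sin (π/2 - α) := (Real.sin_pi_div_two_sub α).symm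
    rw [h1]
    apply Real.strictMonoOn_sin ⟨by nlinarith, by nlinarith⟩ ⟨by nlinarith, by nlinarith⟩
    nlinarith
  have hcot : 1 < Real.cot α := by
    rw [Real.cot_eq_cos_div_sin, lt_div_iff₀ hsin]
    linarith
  have hc : 1 < c := by rw [hc_def]; nlinarith
  clear_value c
  have hk1 : (1:ℝ) ≤ (k:ℝ) := by exact_mod_cast hk
  have h2k : 2 * (k:ℝ) < c - 1 := by
    rw [le_div_iff₀ (by nlinarith : (0:ℝ) < 2 * c - 1)] at hkle
    nlinarith
  have hden : ∀ s : ℝ, 0 < Real.cos s + c := by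
    intro s
    have := Real.neg_one_le_cos s
    nlinarith
  -- the derivative of T
  have hT' : ∀ s : ℝ, HasDerivAt T
      (1 + (k:ℝ) * (2 * (1 / (1 + (Real.sin s / (Real.cos s + c)) ^ 2) *
        ((1 + c * Real.cos s) / (Real.cos s + c) ^ 2)))) s := by
    intro s
    have hf : HasDerivAt (fun s => Real.sin s / (Real.cos s + c))
        ((1 + c * Real.cos s) / (Real.cos s + c) ^ 2) s := by
      have h := (Real.hasDerivAt_sin s).div ((Real.hasDerivAt_cos s).add_const c) (hden s).ne'
      have h9 : (1 + c * Real.cos s) / (Real.cos s + c) ^ 2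
          = (Real.cos s * (Real.cos s + c) - Real.sin s * -Real.sin s) / (Real.cos s + c) ^ 2 := by
        congr 1
        linear_combination -Real.sin_sq_add_cos_sq s
      rw [h9]
      exact h
    have hg := ((hf.arctan).const_mul (2:ℝ)).const_add π
    have hvd : HasDerivAt v (2 * (1 / (1 + (Real.sin s / (Real.cos s + c)) ^ 2) *
        ((1 + c * Real.cos s) / (Real.cos s + c) ^ 2))) s := by
      apply hg.congr_of_eventuallyEq
      filter_upwards with x
      rw [hv x]
    have h2 := (hasDerivAt_id s).add (hvd.const_mul (k:ℝ))
    apply h2.congr_of_eventuallyEq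
    filter_upwards with x
    simp only [hT x, id_eq, Pi.add_apply]
  -- positivity of the derivative
  have hpos : ∀ s : ℝ, 0 < 1 + (k:ℝ) * (2 * (1 / (1 + (Real.sin s / (Real.cos s + c)) ^ 2) *
      ((1 + c * Real.cos s) / (Real.cos s + c) ^ 2))) := by
    intro s
    have hd := hden s
    have hD : 0 < (Real.cos s + c) ^ 2 + (Real.sin s) ^ 2 := by positivity
    have hA : 1 / (1 + (Real.sin s / (Real.cos s + c)) ^ 2) *
        ((1 + c * Real.cos s) / (Real.cos s + c) ^ 2)
        = (1 + c * Real.cos s) / ((Real.cos s + c) ^ 2 + (Real.sin s) ^ 2) := by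
      field_simp
    rw [hA]
    have hN : 0 < (Real.cos s + c) ^ 2 + (Real.sin s) ^ 2 + 2 * (k:ℝ) * (1 + c * Real.cos s) := by
      have hcb := Real.neg_one_le_cos s
      have hpy := Real.sin_sq_add_cos_sq s
      nlinarith [mul_nonneg (by nlinarith : (0:ℝ) ≤ c * (1 + (k:ℝ)))
          (by linarith : (0:ℝ) ≤ 1 + Real.cos s),
        mul_pos (by linarith : (0:ℝ) < c - 1) (by linarith : (0:ℝ) < c - 1 - 2 * (k:ℝ))]
    have key : 1 + (k:ℝ) * (2 * ((1 + c * Real.cos s) / ((Real.cos s + c) ^ 2 + (Real.sin s) ^ 2)))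
        = ((Real.cos s + c) ^ 2 + (Real.sin s) ^ 2 + 2 * (k:ℝ) * (1 + c * Real.cos s)) /
          ((Real.cos s + c) ^ 2 + (Real.sin s) ^ 2) := by
      field_simp
    rw [key]
    exact div_pos hN hD
  apply strictMonoOn_of_deriv_pos (convex_Icc 0 π)
  · exact fun x _ => (hT' x).differentiableAt.continuousAt.continuousWithinAt
  · intro x _
    rw [(hT' x).deriv]
    exact hpos x
end

section
/- Let ρ ∈ (0,2] and suppose z ∈ ℂ, t ∈ ℝ, s ∈ [0,π), s' ∈ [π,2π) satisfy z = -ρe^{i(t-s)} + 1 - e^{it} and z = -ρe^{i(t-s')} - 1 + e^{it}. Then, writing z = z₁ + iz₂, the point (z₁, z₂) satisfies z₁⁴ + z₂⁴ + 2z₁²z₂² - ρ²z₁² + (4-ρ²)z₂² = 0. -/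
open Complex Real

theorem stmt_8 (ρ : ℝ) (hρ : ρ ∈ Set.Ioc 0 2) (z : ℂ) (t s s' : ℝ)
    (hs : s ∈ Set.Ico 0 π) (hs' : s' ∈ Set.Ico π (2 * π))
    (h1 : z = -(ρ : ℂ) * Complex.exp (Complex.I * (t - s)) + 1 - Complex.exp (Complex.I * t))
    (h2 : z = -(ρ : ℂ) * Complex.exp (Complex.I * (t - s')) - 1 + Complex.exp (Complex.I * t)) :
    z.re ^ 4 + z.im ^ 4 + 2 * z.re ^ 2 * z.im ^ 2 - ρ ^ 2 * z.re ^ 2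
      + (4 - ρ ^ 2) * z.im ^ 2 = 0 := by
  obtain ⟨hρ0, hρ2⟩ := hρ
  set ct := Real.cos t
  set st := Real.sin t
  have hw : Complex.exp (Complex.I * t) = (ct : ℂ) + (st : ℂ) * Complex.I := by
    rw [mul_comm, Complex.exp_mul_I, Complex.ofReal_cos, Complex.ofReal_sin]
  have e1 : z + (Complex.exp (Complex.I * t) - 1) = -(ρ : ℂ) * Complex.exp (Complex.I * (t - s)) := by
    rw [h1]; ring
  have e2 : z - (Complex.exp (Complex.I * t) - 1) = -(ρ : ℂ) * Complex.exp (Complex.I * (t - s')) := by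
    rw [h2]; ring
  have habs1 : ‖Complex.exp (Complex.I * ((t : ℂ) - s))‖ = 1 := by
    rw [Complex.norm_exp]; simp
  have habs2 : ‖Complex.exp (Complex.I * ((t : ℂ) - s'))‖ = 1 := by
    rw [Complex.norm_exp]; simp
  have n1 : Complex.normSq (z + (Complex.exp (Complex.I * t) - 1)) = ρ ^ 2 := by
    rw [e1, ← Complex.sq_norm, norm_mul, habs1]
    simp [abs_of_pos hρ0]
  have n2 : Complex.normSq (z - (Complex.exp (Complex.I * t) - 1)) = ρ ^ 2 := by
    rw [e2, ← Complex.sq_norm, norm_mul, habs2]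
    simp [abs_of_pos hρ0]
  rw [hw] at n1 n2
  simp only [Complex.normSq_apply, Complex.add_re, Complex.add_im, Complex.sub_re,
    Complex.sub_im, Complex.mul_re, Complex.mul_im, Complex.ofReal_re, Complex.ofReal_im,
    Complex.I_re, Complex.I_im, Complex.one_re, Complex.one_im] at n1 n2
  have pyth : st ^ 2 + ct ^ 2 = 1 := Real.sin_sq_add_cos_sq t
  have N1 : (z.re + (ct - 1)) ^ 2 + (z.im + st) ^ 2 = ρ ^ 2 := by linear_combination n1
  have N2 : (z.re - (ct - 1)) ^ 2 + (z.im - st) ^ 2 = ρ ^ 2 := by linear_combination n2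
  by_cases hc : ct = 1
  · -- degenerate case: e^{it} = 1, leads to contradiction
    have hst : st = 0 := by nlinarith
    have hw1 : Complex.exp (Complex.I * t) = 1 := by rw [hw, hc, hst]; simp
    rw [hw1] at e1 e2
    have hexp : Complex.exp (Complex.I * ((t : ℂ) - s)) = Complex.exp (Complex.I * ((t : ℂ) - s')) := by
      have hρne : (-(ρ : ℂ)) ≠ 0 := by
        simp only [neg_ne_zero, Ne, Complex.ofReal_eq_zero]
        exact ne_of_gt hρ0
      apply mul_left_cancel₀ hρne
      rw [← e1, ← e2]; ring
    rw [Complex.exp_eq_exp_iff_exists_int] at hexp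
    obtain ⟨n, hn⟩ := hexp
    have hcast : ((t : ℂ) - s) = ((t : ℂ) - s') + n * (2 * π) := by
      have hI : Complex.I * ((t : ℂ) - s) = Complex.I * (((t : ℂ) - s') + n * (2 * π)) := by
        rw [hn]; ring
      exact mul_left_cancel₀ Complex.I_ne_zero hI
    have hreal : (t : ℝ) - s = (t - s') + n * (2 * π) := by
      exact_mod_cast hcast
    have hπ := Real.pi_pos
    have hn0 : (0 : ℝ) < n := by nlinarith [hs.1, hs.2, hs'.1, hs'.2]
    have hn1 : (n : ℝ) < 1 := by nlinarith [hs.1, hs.2, hs'.1, hs'.2]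
    have : (0 : ℤ) < n := by exact_mod_cast hn0
    have : n < 1 := by exact_mod_cast hn1
    omega
  · have key1 : z.re * (1 - ct) = z.im * st := by linear_combination (N2 - N1) / 4
    have key2 : z.re ^ 2 + z.im ^ 2 + 2 * (1 - ct) = ρ ^ 2 := by linear_combination (N1 + N2) / 2 - pyth
    have hcne : 1 - ct ≠ 0 := fun h => hc (by linarith)
    have sq1 : z.re ^ 2 * (1 - ct) ^ 2 = z.im ^ 2 * (2 * (1 - ct) - (1 - ct) ^ 2) := by
      linear_combination (z.re * (1 - ct) + z.im * st) * key1 + z.im ^ 2 * pyth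
    have key3 : z.re ^ 2 * (1 - ct) = z.im ^ 2 * (2 - (1 - ct)) := by
      exact mul_left_cancel₀ hcne (show (1 - ct) * (z.re ^ 2 * (1 - ct))
        = (1 - ct) * (z.im ^ 2 * (2 - (1 - ct))) by linear_combination sq1)
    linear_combination (z.re ^ 2 + z.im ^ 2) * key2 - 2 * key3
end

section
/- Let Φ : ℝⁿ → ℝⁿ be a C¹ map and K ⊂ ℝⁿ a compact set such that Φ restricted to K is injective and the differential DΦ(x) is invertible for every x ∈ K. Then there exists an open neighborhood U ⊇ K such that Φ restricted to U is a C¹ diffeomorphism onto its image. -/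
open Set

theorem stmt_12 (n : ℕ) (hn : 0 < n)
    (Φ : EuclideanSpace ℝ (Fin n) → EuclideanSpace ℝ (Fin n))
    (hΦ : ContDiff ℝ 1 Φ)
    (K : Set (EuclideanSpace ℝ (Fin n))) (hK : IsCompact K)
    (hinj : Set.InjOn Φ K)
    (hder : ∀ x ∈ K, Function.Bijective (fderiv ℝ Φ x)) :
    ∃ U : Set (EuclideanSpace ℝ (Fin n)), IsOpen U ∧ K ⊆ U ∧
      Set.InjOn Φ U ∧ IsOpen (Φ '' U) ∧
      ∃ g : EuclideanSpace ℝ (Fin n) → EuclideanSpace ℝ (Fin n),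
        ContDiffOn ℝ 1 g (Φ '' U) ∧
        (∀ x ∈ U, g (Φ x) = x) ∧ (∀ y ∈ Φ '' U, Φ (g y) = y) := by
  classical
  -- the set where the derivative is invertible is open
  have hfc : Continuous (fderiv ℝ Φ) := hΦ.continuous_fderiv one_ne_zero
  set V : Set (EuclideanSpace ℝ (Fin n)) := {x | IsUnit (fderiv ℝ Φ x)} with hV
  have hVo : IsOpen V := Units.isOpen.preimage hfc
  have hKV : K ⊆ V := fun x hx =>
    ContinuousLinearMap.isUnit_iff_bijective.2 (hder x hx)
  -- at every point of V, there is an invertible strict derivative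
  have strict : ∀ x ∈ V, ∃ e : EuclideanSpace ℝ (Fin n) ≃L[ℝ] EuclideanSpace ℝ (Fin n), HasStrictFDerivAt Φ (e : EuclideanSpace ℝ (Fin n) →L[ℝ] EuclideanSpace ℝ (Fin n)) x := by
    intro x hx
    obtain ⟨u, hu⟩ := hx
    have hfd : HasFDerivAt Φ ((ContinuousLinearEquiv.ofUnit u : EuclideanSpace ℝ (Fin n) ≃L[ℝ] EuclideanSpace ℝ (Fin n)) : EuclideanSpace ℝ (Fin n) →L[ℝ] EuclideanSpace ℝ (Fin n)) x := by
      have : ((ContinuousLinearEquiv.ofUnit u : EuclideanSpace ℝ (Fin n) ≃L[ℝ] EuclideanSpace ℝ (Fin n)) : EuclideanSpace ℝ (Fin n) →L[ℝ] EuclideanSpace ℝ (Fin n)) = fderiv ℝ Φ x := hu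
      rw [this]
      exact (hΦ.differentiable one_ne_zero x).hasFDerivAt
    exact ⟨_, hΦ.contDiffAt.hasStrictFDerivAt' hfd one_ne_zero⟩
  -- local injectivity ⇒ injectivity on an open neighborhood of K
  obtain ⟨U₀, hU₀o, hKU₀, hinjU₀⟩ :
      ∃ t, IsOpen t ∧ K ⊆ t ∧ Set.InjOn Φ t := by
    apply hinj.exists_isOpen_superset hK (fun x _ => hΦ.continuous.continuousAt)
    intro x hx
    obtain ⟨e, he⟩ := strict x (hKV hx)
    refine ⟨(he.toOpenPartialHomeomorph Φ).source,
      (he.toOpenPartialHomeomorph Φ).open_source.mem_nhds he.mem_toOpenPartialHomeomorph_source, ?_⟩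
    have := (he.toOpenPartialHomeomorph Φ).injOn
    simpa using this
  refine ⟨U₀ ∩ V, hU₀o.inter hVo, subset_inter hKU₀ hKV,
    hinjU₀.mono inter_subset_left, ?_, ?_⟩
  · -- openness of the image
    rw [isOpen_iff_mem_nhds]
    rintro y ⟨x, hxU, rfl⟩
    obtain ⟨e, he⟩ := strict x hxU.2
    rw [← he.map_nhds_eq_of_equiv]
    exact Filter.image_mem_map ((hU₀o.inter hVo).mem_nhds hxU)
  · -- the inverse function
    set U := U₀ ∩ V
    have hUo : IsOpen U := hU₀o.inter hVo
    have hinjU : Set.InjOn Φ U := hinjU₀.mono inter_subset_left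
    have himo : IsOpen (Φ '' U) := by
      rw [isOpen_iff_mem_nhds]
      rintro y ⟨x, hxU, rfl⟩
      obtain ⟨e, he⟩ := strict x hxU.2
      rw [← he.map_nhds_eq_of_equiv]
      exact Filter.image_mem_map (hUo.mem_nhds hxU)
    refine ⟨Function.invFunOn Φ U, ?_, fun x hx => hinjU.leftInvOn_invFunOn hx,
      fun y hy => Function.invFunOn_eq (by rcases hy with ⟨x, hx, rfl⟩; exact ⟨x, hx, rfl⟩)⟩
    intro y hy
    rcases hy with ⟨x, hxU, rfl⟩
    obtain ⟨e, he⟩ := strict x hxU.2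
    -- the local inverse given by the inverse function theorem
    have hli : ContDiffAt ℝ 1 (he.localInverse Φ e x) (Φ x) := by
      have h1 : ContDiffAt ℝ 1 Φ x := hΦ.contDiffAt
      have h2 : HasFDerivAt Φ (e : EuclideanSpace ℝ (Fin n) →L[ℝ] EuclideanSpace ℝ (Fin n)) x := he.hasFDerivAt
      have := h1.to_localInverse (f' := e) h2 one_ne_zero
      have heq : h1.localInverse h2 one_ne_zero = he.localInverse Φ e x := by
        have : ∀ᶠ z in nhds x, (h1.localInverse h2 one_ne_zero) (Φ z) = z :=
          (h1.hasStrictFDerivAt' h2 one_ne_zero).eventually_left_inverse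
        funext y
        rfl
      rwa [heq] at this
    -- `invFunOn Φ U` agrees with the local inverse near `Φ x`
    have hEq : Function.invFunOn Φ U =ᶠ[nhds (Φ x)] he.localInverse Φ e x := by
      have h1 : ∀ᶠ y in nhds (Φ x), Φ (he.localInverse Φ e x y) = y :=
        he.eventually_right_inverse
      have h2 : ∀ᶠ y in nhds (Φ x), he.localInverse Φ e x y ∈ U := by
        have : ContinuousAt (he.localInverse Φ e x) (Φ x) := he.localInverse_continuousAt
        have h3 : he.localInverse Φ e x (Φ x) = x := he.localInverse_apply_image
        have := this.preimage_mem_nhds (hUo.mem_nhds (by rw [h3]; exact hxU))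
        exact this
      have h3 : ∀ᶠ y in nhds (Φ x), y ∈ Φ '' U :=
        himo.mem_nhds (mem_image_of_mem Φ hxU)
      filter_upwards [h1, h2, h3] with y hy1 hy2 hy3
      have hg1 : Function.invFunOn Φ U y ∈ U := Function.invFunOn_mem (by
        rcases hy3 with ⟨z, hz, rfl⟩; exact ⟨z, hz, rfl⟩)
      have hg2 : Φ (Function.invFunOn Φ U y) = y := Function.invFunOn_eq (by
        rcases hy3 with ⟨z, hz, rfl⟩; exact ⟨z, hz, rfl⟩)
      exact hinjU hg1 hy2 (by rw [hg2, hy1])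
    exact ((hli.congr_of_eventuallyEq hEq).contDiffWithinAt)
end

section
/- Let Φ : ℝⁿ → ℝⁿ be C¹, K compact with Φ|_K injective and DΦ invertible on K, and U ⊇ K an open set on which Φ is a C¹ diffeomorphism onto its image. Let (Φ_k) be a sequence of C¹ maps converging to Φ in C¹ on compact subsets. Then for every open set Ũ with compact closure contained in U, there exists k̄ such that for all k ≥ k̄, Φ_k restricted to Ũ is injective with everywhere invertible differential. -/
open Set Filter

section Aux
open Metric Topology
variable {E : Type*} [NormedAddCommGroup E] [NormedSpace ℝ E] [FiniteDimensional ℝ E]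

/-- Local anti-Lipschitz bound at a point where the derivative is invertible. -/
lemma aux_antilipschitz {Φ : E → E} (hΦ : ContDiff ℝ 1 Φ) {a : E}
    (hbij : Function.Bijective (fderiv ℝ Φ a)) :
    ∃ K : NNReal, ∃ s ∈ 𝓝 a, ∀ x ∈ s, ∀ y ∈ s, dist x y ≤ K * dist (Φ x) (Φ y) := by
  have hst : HasStrictFDerivAt Φ (fderiv ℝ Φ a) a :=
    hΦ.contDiffAt.hasStrictFDerivAt one_ne_zero
  set e : E ≃L[ℝ] E :=
    (LinearEquiv.ofBijective ((fderiv ℝ Φ a) : E →ₗ[ℝ] E) hbij).toContinuousLinearEquiv with he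
  have hcoe : (e : E →L[ℝ] E) = fderiv ℝ Φ a := by ext x; rfl
  have hst' : HasStrictFDerivAt Φ (e : E →L[ℝ] E) a := by rw [hcoe]; exact hst
  obtain ⟨s, has, hso, happ⟩ := hst'.approximates_deriv_on_open_nhds
  have hanti := happ.antilipschitz (e.subsingleton_or_nnnorm_symm_pos.imp id fun h =>
    NNReal.half_lt_self (ne_of_gt (inv_pos.2 h)))
  exact ⟨_, s, hso.mem_nhds has, fun x hx y hy => hanti.le_mul_dist ⟨x, hx⟩ ⟨y, hy⟩⟩

/-- Uniform lower bound for close-by pairs on a compact set. -/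
lemma aux_near {Φ : E → E} (hΦ : ContDiff ℝ 1 Φ) {C : Set E} (hC : IsCompact C)
    (hbij : ∀ a ∈ C, Function.Bijective (fderiv ℝ Φ a)) :
    ∃ r > (0:ℝ), ∃ c > (0:ℝ), ∀ x ∈ C, ∀ y ∈ C, dist x y < r →
      c * dist x y ≤ dist (Φ x) (Φ y) := by
  by_contra H
  push_neg at H
  have H' : ∀ m : ℕ, ∃ x ∈ C, ∃ y ∈ C, dist x y < 1/(m+1) ∧
      dist (Φ x) (Φ y) < (1/(m+1)) * dist x y := by
    intro m
    obtain ⟨x, hx, y, hy, h1, h2⟩ := H (1/(m+1)) (by positivity) (1/(m+1)) (by positivity)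
    exact ⟨x, hx, y, hy, h1, h2⟩
  choose x hx y hy h1 h2 using H'
  obtain ⟨a, haC, φ, hφ, hxa⟩ := hC.tendsto_subseq hx
  have hdx : Tendsto (fun m => dist (x (φ m)) a) atTop (𝓝 0) :=
    tendsto_iff_dist_tendsto_zero.1 hxa
  have hdy : Tendsto (fun m => dist (y (φ m)) a) atTop (𝓝 0) := by
    apply squeeze_zero (fun m => dist_nonneg)
      (g := fun m => 1/((φ m : ℝ)+1) + dist (x (φ m)) a)
    · intro m
      calc dist (y (φ m)) a ≤ dist (y (φ m)) (x (φ m)) + dist (x (φ m)) a := dist_triangle _ _ _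
        _ ≤ 1/((φ m : ℝ)+1) + dist (x (φ m)) a := by
            have := (h1 (φ m)).le
            rw [dist_comm (y (φ m)) (x (φ m))]
            linarith
    · have h0 : Tendsto (fun m => 1/((φ m : ℝ)+1)) atTop (𝓝 0) := by
        apply tendsto_one_div_add_atTop_nhds_zero_nat.comp (hφ.tendsto_atTop)
      simpa using h0.add hdx
  have hya : Tendsto (fun m => y (φ m)) atTop (𝓝 a) :=
    tendsto_iff_dist_tendsto_zero.2 hdy
  obtain ⟨K, s, hs, hK⟩ := aux_antilipschitz hΦ (hbij a haC)
  have ev1 : ∀ᶠ m in atTop, x (φ m) ∈ s := hxa.eventually_mem hs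
  have ev2 : ∀ᶠ m in atTop, y (φ m) ∈ s := hya.eventually_mem hs
  obtain ⟨m, ⟨hm1, hm2⟩, hm3⟩ := ((ev1.and ev2).and (eventually_ge_atTop ⌈(K:ℝ)⌉₊)).exists
  have hdpos : 0 < dist (x (φ m)) (y (φ m)) := by
    by_contra h
    push_neg at h
    have h0 : dist (x (φ m)) (y (φ m)) = 0 := le_antisymm h dist_nonneg
    have hh := h2 (φ m)
    rw [h0, mul_zero] at hh
    exact absurd hh (not_lt.2 dist_nonneg)
  have hle : dist (x (φ m)) (y (φ m)) ≤ K * dist (Φ (x (φ m))) (Φ (y (φ m))) :=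
    hK _ hm1 _ hm2
  have hKm : (K : ℝ) < (φ m : ℝ) + 1 := by
    have h1' : (K : ℝ) ≤ ⌈(K:ℝ)⌉₊ := Nat.le_ceil _
    have h2' : (⌈(K:ℝ)⌉₊ : ℝ) ≤ m := by exact_mod_cast hm3
    have h3' : (m : ℝ) ≤ (φ m : ℝ) := by exact_mod_cast hφ.le_apply
    linarith
  have := h2 (φ m)
  have hKpos : (0:ℝ) < K := by
    by_contra h
    push_neg at h
    have : (K:ℝ) * dist (Φ (x (φ m))) (Φ (y (φ m))) ≤ 0 :=
      mul_nonpos_of_nonpos_of_nonneg h dist_nonneg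
    linarith
  have hfinal : dist (x (φ m)) (y (φ m)) <
      K * ((1/((φ m : ℝ)+1)) * dist (x (φ m)) (y (φ m))) := by
    calc dist (x (φ m)) (y (φ m)) ≤ K * dist (Φ (x (φ m))) (Φ (y (φ m))) := hle
      _ < K * ((1/((φ m : ℝ)+1)) * dist (x (φ m)) (y (φ m))) := by
          apply mul_lt_mul_of_pos_left _ hKpos
          exact this
  have : (K:ℝ) * (1/((φ m : ℝ)+1)) < 1 := by
    rw [mul_one_div, div_lt_one (by positivity)]
    exact hKm
  nlinarith [hfinal, hdpos]

/-- Uniform lower bound for far-apart pairs on a compact set. -/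
lemma aux_far {Φ : E → E} (hΦc : Continuous Φ) {C : Set E} (hC : IsCompact C)
    (hinj : Set.InjOn Φ C) {r : ℝ} (hr : 0 < r) :
    ∃ m > (0:ℝ), ∀ x ∈ C, ∀ y ∈ C, r ≤ dist x y → m ≤ dist (Φ x) (Φ y) := by
  set S : Set (E × E) := {p | (p.1 ∈ C ∧ p.2 ∈ C) ∧ r ≤ dist p.1 p.2} with hS
  have hSc : IsCompact S := by
    apply (hC.prod hC).of_isClosed_subset
    · apply IsClosed.inter
      · exact (hC.isClosed.prod hC.isClosed)
      · exact isClosed_le continuous_const (continuous_fst.dist continuous_snd)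
    · intro p hp; exact ⟨hp.1.1, hp.1.2⟩
  rcases S.eq_empty_or_nonempty with hSe | hSne
  · refine ⟨1, one_pos, fun x hxC y hyC hd => absurd ?_ (Set.notMem_empty ((x,y) : E × E))⟩
    rw [← hSe]; exact ⟨⟨hxC, hyC⟩, hd⟩
  · obtain ⟨p₀, hp₀S, hmin⟩ := hSc.exists_isMinOn hSne
      ((hΦc.comp continuous_fst).dist (hΦc.comp continuous_snd)).continuousOn
    refine ⟨dist (Φ p₀.1) (Φ p₀.2), ?_, fun x hxC y hyC hd => by simpa using hmin (show ((x,y) : E × E) ∈ S from ⟨⟨hxC, hyC⟩, hd⟩)⟩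
    rw [gt_iff_lt, dist_pos]
    intro h
    have : p₀.1 = p₀.2 := hinj hp₀S.1.1 hp₀S.1.2 h
    have : dist p₀.1 p₀.2 = 0 := by rw [this, dist_self]
    linarith [hp₀S.2]

end Aux

theorem stmt_13 (n : ℕ) (hn : 0 < n)
    (Φ : EuclideanSpace ℝ (Fin n) → EuclideanSpace ℝ (Fin n))
    (hΦ : ContDiff ℝ 1 Φ)
    (K : Set (EuclideanSpace ℝ (Fin n))) (hK : IsCompact K)
    (hinj : Set.InjOn Φ K)
    (hder : ∀ x ∈ K, Function.Bijective (fderiv ℝ Φ x))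
    (U : Set (EuclideanSpace ℝ (Fin n))) (hU : IsOpen U) (hKU : K ⊆ U)
    (hinjU : Set.InjOn Φ U) (hderU : ∀ x ∈ U, Function.Bijective (fderiv ℝ Φ x))
    (Φseq : ℕ → EuclideanSpace ℝ (Fin n) → EuclideanSpace ℝ (Fin n))
    (hΦseq : ∀ k, ContDiff ℝ 1 (Φseq k))
    (hconv : ∀ C : Set (EuclideanSpace ℝ (Fin n)), IsCompact C →
        TendstoUniformlyOn Φseq Φ atTop C ∧
        TendstoUniformlyOn (fun k => fderiv ℝ (Φseq k)) (fderiv ℝ Φ) atTop C)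
    (V : Set (EuclideanSpace ℝ (Fin n))) (hV : IsOpen V)
    (hVc : IsCompact (closure V)) (hVU : closure V ⊆ U) :
    ∃ k₀ : ℕ, ∀ k ≥ k₀, Set.InjOn (Φseq k) V ∧
      ∀ x ∈ V, Function.Bijective (fderiv ℝ (Φseq k) x) := by
  classical
  set C := closure V with hCdef
  obtain ⟨ρ, ρpos, hρ⟩ := hVc.exists_cthickening_subset_open hU hVU
  set C' := Metric.cthickening ρ C with hC'def
  have hC'c : IsCompact C' := hVc.cthickening
  obtain ⟨r, rpos, c, cpos, hnear⟩ := aux_near hΦ hVc (fun a ha => hderU a (hVU ha))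
  set δ := min r ρ with hδdef
  have δpos : 0 < δ := lt_min rpos ρpos
  obtain ⟨m, mpos, hfar⟩ := aux_far hΦ.continuous hVc (hinjU.mono hVU) δpos
  have himg : IsCompact ((fderiv ℝ Φ) '' C) := hVc.image (hΦ.continuous_fderiv one_ne_zero)
  have himgsub : (fderiv ℝ Φ) '' C ⊆
      {T : EuclideanSpace ℝ (Fin n) →L[ℝ] EuclideanSpace ℝ (Fin n) | IsUnit T} := by
    rintro _ ⟨a, ha, rfl⟩
    exact ContinuousLinearMap.isUnit_iff_bijective.2 (hderU a (hVU ha))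
  obtain ⟨ε₂, ε₂pos, hε₂⟩ := himg.exists_thickening_subset_open Units.isOpen himgsub
  have E1 := (Metric.tendstoUniformlyOn_iff.1 (hconv C' hC'c).2) (c/2) (by positivity)
  have E2 := (Metric.tendstoUniformlyOn_iff.1 (hconv C hVc).1) (m/2) (by positivity)
  have E3 := (Metric.tendstoUniformlyOn_iff.1 (hconv C hVc).2) ε₂ ε₂pos
  obtain ⟨k₀, hk₀⟩ := eventually_atTop.1 ((E1.and E2).and E3)
  refine ⟨k₀, fun k hk => ?_⟩
  obtain ⟨⟨hE1, hE2⟩, hE3⟩ := hk₀ k hk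
  have hVC : V ⊆ C := subset_closure
  constructor
  · intro p hp q hq hfeq
    by_contra hpq
    have hdpq : 0 < dist p q := dist_pos.2 hpq
    rcases lt_or_ge (dist p q) δ with hlt | hge
    · have hseg : segment ℝ p q ⊆ C' := by
        intro z hz
        have h1 : segment ℝ p q ⊆ Metric.closedBall p (dist p q) :=
          (convex_closedBall p (dist p q)).segment_subset
            (Metric.mem_closedBall_self dist_nonneg)
            (by simp [Metric.mem_closedBall, dist_comm])
        have h2 : Metric.closedBall p (dist p q) ⊆ Metric.closedBall p ρ :=
          Metric.closedBall_subset_closedBall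
            (le_of_lt (lt_of_lt_of_le hlt (min_le_right _ _)))
        exact Metric.closedBall_subset_cthickening (hVC hp) ρ (h2 (h1 hz))
      have hdiff : ∀ z ∈ segment ℝ p q,
          DifferentiableAt ℝ (fun w => Φseq k w - Φ w) z :=
        fun z _ => ((hΦseq k).differentiable one_ne_zero z).sub (hΦ.differentiable one_ne_zero z)
      have hbound : ∀ z ∈ segment ℝ p q,
          ‖fderiv ℝ (fun w => Φseq k w - Φ w) z‖ ≤ c/2 := by
        intro z hz
        rw [fderiv_fun_sub ((hΦseq k).differentiable one_ne_zero z) (hΦ.differentiable one_ne_zero z)]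
        have hz' := hE1 z (hseg hz)
        rw [dist_eq_norm] at hz'
        rw [norm_sub_rev]
        exact hz'.le
      have hmv := (convex_segment p q).norm_image_sub_le_of_norm_fderiv_le hdiff hbound
        (left_mem_segment ℝ p q) (right_mem_segment ℝ p q)
      have hnb := hnear p (hVC hp) q (hVC hq) (lt_of_lt_of_le hlt (min_le_left _ _))
      have heq : Φseq k q - Φ q - (Φseq k p - Φ p) = -(Φ q - Φ p) := by
        rw [← hfeq]; abel
      rw [heq, norm_neg] at hmv
      have h1 : dist (Φ p) (Φ q) = ‖Φ q - Φ p‖ := by rw [dist_comm, dist_eq_norm]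
      have h2 : dist p q = ‖q - p‖ := by rw [dist_comm, dist_eq_norm]
      rw [h1, h2] at hnb
      have ht : 0 < ‖q - p‖ := by rw [← h2]; exact hdpq
      nlinarith [hnb, hmv, ht, cpos]
    · have hf := hfar p (hVC hp) q (hVC hq) hge
      have d1 := hE2 p (hVC hp)
      have d2 := hE2 q (hVC hq)
      have hzero : dist (Φseq k p) (Φseq k q) = 0 := by rw [hfeq, dist_self]
      have htri := dist_triangle4 (Φ p) (Φseq k p) (Φseq k q) (Φ q)
      rw [hzero] at htri
      have d2' : dist (Φseq k q) (Φ q) < m/2 := by rw [dist_comm]; exact d2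
      linarith
  · intro x hx
    have hx' := hVC hx
    have h3 := hE3 x hx'
    have hmem : fderiv ℝ (Φseq k) x ∈ Metric.thickening ε₂ ((fderiv ℝ Φ) '' C) := by
      rw [Metric.mem_thickening_iff]
      exact ⟨fderiv ℝ Φ x, ⟨x, hx', rfl⟩, by rw [dist_comm]; exact h3⟩
    exact ContinuousLinearMap.isUnit_iff_bijective.1 (hε₂ hmem)
end

section
/- Define the planar curve L(s) = ( cos(s)(-2C + (π/2)sin²(s)), sin(s)(π + 2C - (π/2)sin²(s)) ) for a constant C with 0 < C < π/4. Then L has exactly four points in [0, 2π) where the derivative L'(s) vanishes, namely the solutions of sin²(s) = (2 + 4C/π)/3. -/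
open Real Set

lemma aux_d1 (C s : ℝ) :
    HasDerivAt (fun x : ℝ => Real.cos x * (-2 * C + (π / 2) * Real.sin x ^ 2))
      (Real.sin s * (π + 2 * C - 3 * π / 2 * Real.sin s ^ 2)) s := by
  have h := (Real.hasDerivAt_cos s).mul
    ((((Real.hasDerivAt_sin s).pow 2).const_mul (π / 2)).const_add (-2 * C))
  refine h.congr_deriv ?_; symm
  simp only [Pi.pow_apply]
  have htr := Real.sin_sq_add_cos_sq s
  push_cast
  linear_combination (-π * Real.sin s) * htr

lemma aux_d2 (C s : ℝ) :
    HasDerivAt (fun x : ℝ => Real.sin x * (π + 2 * C - (π / 2) * Real.sin x ^ 2))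
      (Real.cos s * (π + 2 * C - 3 * π / 2 * Real.sin s ^ 2)) s := by
  have h := (Real.hasDerivAt_sin s).mul
    ((((Real.hasDerivAt_sin s).pow 2).const_mul (π / 2)).const_sub (π + 2 * C))
  refine h.congr_deriv ?_; symm
  simp only [Pi.pow_apply]
  push_cast
  ring

/-- In `[0, π]`, solutions of `sin t = c` with `0 < c < 1` are `arcsin c` and `π - arcsin c`. -/
lemma aux_sol (c t : ℝ) (hc0 : 0 < c) (hc1 : c < 1) (ht0 : 0 ≤ t) (ht1 : t ≤ π)
    (h : Real.sin t = c) : t = Real.arcsin c ∨ t = π - Real.arcsin c := by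
  rcases le_or_gt t (π / 2) with hle | hgt
  · left
    rw [← h, Real.arcsin_sin (by linarith [Real.pi_pos]) hle]
  · right
    have h2 : Real.sin (π - t) = c := by rw [Real.sin_pi_sub]; exact h
    have : Real.arcsin c = π - t := by
      rw [← h2, Real.arcsin_sin (by linarith [Real.pi_pos]) (by linarith)]
    linarith

theorem stmt_14 (C : ℝ) (hC : C ∈ Set.Ioo 0 (π / 4))
    (L : ℝ → ℝ × ℝ)
    (hL : ∀ s, L s = (Real.cos s * (-2 * C + (π / 2) * Real.sin s ^ 2),
                      Real.sin s * (π + 2 * C - (π / 2) * Real.sin s ^ 2))) :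
    {s ∈ Set.Ico 0 (2 * π) | deriv L s = 0}
      = {s ∈ Set.Ico 0 (2 * π) | Real.sin s ^ 2 = (2 + 4 * C / π) / 3} ∧
    {s ∈ Set.Ico 0 (2 * π) | deriv L s = 0}.ncard = 4 := by
  obtain ⟨hC0, hC1⟩ := hC
  have hπ : (0:ℝ) < π := Real.pi_pos
  have hLfun : L = fun s => (Real.cos s * (-2 * C + (π / 2) * Real.sin s ^ 2),
      Real.sin s * (π + 2 * C - (π / 2) * Real.sin s ^ 2)) := funext hL
  set k : ℝ := (2 + 4 * C / π) / 3 with hk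
  -- key equivalence
  have key : ∀ s : ℝ, deriv L s = 0 ↔ Real.sin s ^ 2 = k := by
    intro s
    have hd : HasDerivAt L
        (Real.sin s * (π + 2 * C - 3 * π / 2 * Real.sin s ^ 2),
         Real.cos s * (π + 2 * C - 3 * π / 2 * Real.sin s ^ 2)) s := by
      rw [hLfun]; exact (aux_d1 C s).prodMk (aux_d2 C s)
    rw [hd.deriv]
    set A : ℝ := π + 2 * C - 3 * π / 2 * Real.sin s ^ 2 with hA
    constructor
    · intro h
      rw [Prod.ext_iff] at h
      obtain ⟨h1, h2⟩ := h
      simp only [Prod.fst_zero, Prod.snd_zero] at h1 h2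
      have hA0 : A = 0 := by
        by_contra hA0
        have hs : Real.sin s = 0 := by
          rcases mul_eq_zero.mp h1 with h | h
          · exact h
          · exact absurd h hA0
        have hcs : Real.cos s = 0 := by
          rcases mul_eq_zero.mp h2 with h | h
          · exact h
          · exact absurd h hA0
        have := Real.sin_sq_add_cos_sq s
        rw [hs, hcs] at this; norm_num at this
      have : 3 * π / 2 * Real.sin s ^ 2 = π + 2 * C := by rw [hA] at hA0; linarith
      rw [hk]
      field_simp
      linarith
    · intro h
      have hA0 : A = 0 := by
        rw [hA, h, hk]
        field_simp
        ring
      rw [hA0, mul_zero, mul_zero]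
      rfl
  have hset : {s ∈ Set.Ico 0 (2 * π) | deriv L s = 0}
      = {s ∈ Set.Ico 0 (2 * π) | Real.sin s ^ 2 = k} := by
    ext s; simp only [Set.mem_setOf_eq, key]
  refine ⟨hset, ?_⟩
  rw [hset]
  -- now count solutions of sin² s = k on [0, 2π)
  have hk0 : (0:ℝ) < k := by
    rw [hk]; positivity
  have hk1 : k < 1 := by
    rw [hk]
    have : 4 * C / π < 1 := by
      rw [div_lt_one hπ]; linarith
    linarith
  set c : ℝ := Real.sqrt k with hc
  have hc0 : 0 < c := Real.sqrt_pos.mpr hk0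
  have hc1 : c < 1 := by
    rw [hc, show (1:ℝ) = Real.sqrt 1 by simp]
    exact Real.sqrt_lt_sqrt (le_of_lt hk0) hk1
  have hcsq : c ^ 2 = k := Real.sq_sqrt (le_of_lt hk0)
  set a : ℝ := Real.arcsin c with ha
  have ha0 : 0 < a := Real.arcsin_pos.mpr hc0
  have ha1 : a < π / 2 := Real.arcsin_lt_pi_div_two.mpr hc1
  have hsina : Real.sin a = c := Real.sin_arcsin (by linarith) (le_of_lt hc1)
  -- characterize the solution set
  have hsols : {s ∈ Set.Ico 0 (2 * π) | Real.sin s ^ 2 = k}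
      = {a, π - a, π + a, 2 * π - a} := by
    ext s
    simp only [Set.mem_setOf_eq, Set.mem_Ico, Set.mem_insert_iff, Set.mem_singleton_iff]
    constructor
    · rintro ⟨⟨hs0, hs2⟩, hsq⟩
      have hfac : (Real.sin s - c) * (Real.sin s + c) = 0 := by
        have : Real.sin s ^ 2 = c ^ 2 := by rw [hcsq]; exact hsq
        nlinarith
      rcases mul_eq_zero.mp hfac with hpos | hneg
      · -- sin s = c > 0
        have hsin : Real.sin s = c := by linarith
        have hslt : s < π := by
          by_contra hge
          push_neg at hge
          have h1 : Real.sin (s - π) ≥ 0 :=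
            Real.sin_nonneg_of_nonneg_of_le_pi (by linarith) (by linarith)
          rw [Real.sin_sub_pi] at h1
          linarith
        rcases aux_sol c s hc0 hc1 hs0 (le_of_lt hslt) hsin with h | h
        · left; exact h
        · right; left; exact h
      · -- sin s = -c < 0
        have hsin : Real.sin s = -c := by linarith
        have hsgt : π < s := by
          by_contra hle
          push_neg at hle
          have h1 : Real.sin s ≥ 0 := Real.sin_nonneg_of_nonneg_of_le_pi hs0 hle
          linarith
        have hsin2 : Real.sin (s - π) = c := by
          rw [Real.sin_sub_pi, hsin]; ring
        rcases aux_sol c (s - π) hc0 hc1 (by linarith) (by linarith) hsin2 with h | h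
        · right; right; left; linarith
        · right; right; right; linarith
    · intro h
      have hmem : ∀ t, Real.sin t ^ 2 = k → 0 ≤ t → t < 2 * π →
          (0 ≤ t ∧ t < 2 * π) ∧ Real.sin t ^ 2 = k := fun t h1 h2 h3 => ⟨⟨h2, h3⟩, h1⟩
      rcases h with h | h | h | h <;> subst h
      · exact hmem a (by rw [hsina, hcsq]) (le_of_lt ha0) (by linarith)
      · exact hmem _ (by rw [Real.sin_pi_sub, hsina, hcsq]) (by linarith) (by linarith)
      · exact hmem _ (by
            have : Real.sin (π + a) = -Real.sin a := by simp [Real.sin_add]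
            rw [this, hsina, neg_pow, hcsq]; norm_num)
          (by linarith) (by linarith)
      · exact hmem _ (by
            have : Real.sin (2 * π - a) = -Real.sin a := by
              rw [Real.sin_sub, Real.sin_two_pi, Real.cos_two_pi]; ring
            rw [this, hsina, neg_pow, hcsq]; norm_num)
          (by linarith) (by linarith)
  rw [hsols]
  have h1 : a ≠ π - a := by intro h; linarith [ha1, (by linarith : a = π / 2)]
  have h2 : a ≠ π + a := by intro h; linarith
  have h3 : a ≠ 2 * π - a := by intro h; nlinarith
  have h4 : (π - a) ≠ π + a := by intro h; linarith
  have h5 : (π - a) ≠ 2 * π - a := by intro h; linarith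
  have h6 : (π + a) ≠ 2 * π - a := by intro h; nlinarith
  rw [Set.ncard_insert_of_notMem (by simp [h1, h2, h3]),
      Set.ncard_insert_of_notMem (by simp [h4, h5]),
      Set.ncard_insert_of_notMem (by simp [h6]),
      Set.ncard_singleton]
end

section
/- For 0 < C < π/4, let θ_d ∈ (0, π/2) satisfy sin(θ_d) = 2√(C/π). Then the curve L(s) = ( cos(s)(-2C + (π/2)sin²(s)), sin(s)(π + 2C - (π/2)sin²(s)) ) satisfies L(θ_d) = L(π - θ_d), i.e. it has a double point. -/
open Real Set

theorem stmt_15 (C : ℝ) (hC : C ∈ Set.Ioo 0 (π / 4))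
    (θd : ℝ) (hθd : θd ∈ Set.Ioo 0 (π / 2)) (hsin : Real.sin θd = 2 * Real.sqrt (C / π))
    (L : ℝ → ℝ × ℝ)
    (hL : ∀ s, L s = (Real.cos s * (-2 * C + (π / 2) * Real.sin s ^ 2),
                      Real.sin s * (π + 2 * C - (π / 2) * Real.sin s ^ 2))) :
    L θd = L (π - θd) := by
  have hCpos := hC.1
  have hπ := Real.pi_pos
  have hsq : Real.sin θd ^ 2 = 4 * (C / π) := by
    rw [hsin, mul_pow, Real.sq_sqrt (by positivity)]; ring
  have hk : -2 * C + (π / 2) * Real.sin θd ^ 2 = 0 := by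
    rw [hsq]; field_simp; ring
  rw [hL, hL, Real.sin_pi_sub, Real.cos_pi_sub, hk]
  simp
end

section
/- Let D be the determinant of the 2×2 matrix whose columns are (e^{tA₀})·σ'(s') and A₀·p + b₀ - (A₀·p - b₀) = 2b₀, where A₀ = [[0,-1],[1,0]], b₀ = (0,1)ᵀ, σ(s') = 2r̄·e^{i(π-s')} (as a planar curve), and p = e^{tA₀}σ(s') is a point where two pendulum trajectories meet. Then D = 4r̄·sin(s' - t); moreover, if t = -2arctan( r̄ sin(s') / (1 - r̄ cos(s')) ) (with r̄ ∈ (0,1), s' ∈ (π, 2π)), then D = 4r̄(1 - r̄²)sin(s') / ((1 - r̄cos(s'))² + (r̄ sin(s'))²). -/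
open Real Matrix

lemma sin2arctan (x : ℝ) : Real.sin (2 * Real.arctan x) = 2 * x / (1 + x ^ 2) := by
  rw [Real.sin_two_mul, Real.sin_arctan, Real.cos_arctan]
  have hq : Real.sqrt (1 + x ^ 2) ≠ 0 := by positivity
  have hq2 : Real.sqrt (1 + x ^ 2) * Real.sqrt (1 + x ^ 2) = 1 + x ^ 2 :=
    Real.mul_self_sqrt (by positivity)
  field_simp
  rw [Real.sq_sqrt (by positivity)]

lemma cos2arctan (x : ℝ) : Real.cos (2 * Real.arctan x) = (1 - x ^ 2) / (1 + x ^ 2) := by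
  rw [Real.cos_two_mul, Real.cos_arctan]
  have h : (1:ℝ) + x ^ 2 ≠ 0 := by positivity
  rw [div_pow, one_pow, Real.sq_sqrt (by positivity)]
  field_simp
  ring

theorem stmt_19 (r : ℝ) (hr : r ∈ Set.Ioo 0 1) (s' t : ℝ) (hs' : s' ∈ Set.Ioo π (2 * π))
    (σ σ' : ℝ → ℝ × ℝ)
    (hσ : ∀ u, σ u = (2 * r * Real.cos (π - u), 2 * r * Real.sin (π - u)))
    (hσ' : ∀ u, HasDerivAt σ (σ' u) u)
    (rot : ℝ → ℝ × ℝ → ℝ × ℝ)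
    (hrot : ∀ θ p, rot θ p = (p.1 * Real.cos θ - p.2 * Real.sin θ,
                              p.1 * Real.sin θ + p.2 * Real.cos θ))
    (D : ℝ) (hD : D = (!![(rot t (σ' s')).1, 0; (rot t (σ' s')).2, 2] : Matrix (Fin 2) (Fin 2) ℝ).det) :
    D = 4 * r * Real.sin (s' - t) ∧
    (t = -2 * Real.arctan (r * Real.sin s' / (1 - r * Real.cos s')) →
      D = 4 * r * (1 - r ^ 2) * Real.sin s' /
            ((1 - r * Real.cos s') ^ 2 + (r * Real.sin s') ^ 2)) := by
  obtain ⟨hr0, hr1⟩ := hr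
  have hσfun : σ = fun u => (2 * r * Real.cos (π - u), 2 * r * Real.sin (π - u)) :=
    funext hσ
  have hd : ∀ u, HasDerivAt σ (2 * r * Real.sin (π - u), -(2 * r * Real.cos (π - u))) u := by
    intro u
    rw [hσfun]
    have hin : HasDerivAt (fun u : ℝ => π - u) (-1) u := by
      simpa using (hasDerivAt_id u).const_sub π
    have h1 : HasDerivAt (fun u : ℝ => 2 * r * Real.cos (π - u)) (2 * r * Real.sin (π - u)) u := by
      have := ((Real.hasDerivAt_cos (π - u)).comp u hin).const_mul (2 * r)
      exact this.congr_deriv (by ring)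
    have h2 : HasDerivAt (fun u : ℝ => 2 * r * Real.sin (π - u)) (-(2 * r * Real.cos (π - u))) u := by
      have := ((Real.hasDerivAt_sin (π - u)).comp u hin).const_mul (2 * r)
      exact this.congr_deriv (by ring)
    exact h1.prodMk h2
  have hσ's : σ' s' = (2 * r * Real.sin (π - s'), -(2 * r * Real.cos (π - s'))) :=
    (hσ' s').unique (hd s')
  have hDval : D = 4 * r * Real.sin (s' - t) := by
    rw [hD, Matrix.det_fin_two_of, hrot, hσ's]
    simp only [Real.sin_pi_sub, Real.cos_pi_sub, Real.sin_sub, Real.sin_pi, Real.cos_pi]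
    ring
  refine ⟨hDval, fun ht => ?_⟩
  have ha : 0 < 1 - r * Real.cos s' := by
    nlinarith [Real.cos_le_one s', Real.neg_one_le_cos s']
  set a := 1 - r * Real.cos s' with hadef
  set b := r * Real.sin s' with hbdef
  have hst : s' - t = s' + 2 * Real.arctan (b / a) := by rw [ht]; ring
  have hden : (0:ℝ) < a ^ 2 + b ^ 2 := by positivity
  have hsin : Real.sin (s' - t)
      = (1 - r ^ 2) * Real.sin s' / (a ^ 2 + b ^ 2) := by
    have key : Real.sin s' * (a ^ 2 - b ^ 2) + Real.cos s' * (2 * b * a)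
        = (1 - r ^ 2) * Real.sin s' := by
      rw [hadef, hbdef]
      linear_combination (-(r ^ 2 * Real.sin s')) * Real.sin_sq_add_cos_sq s'
    rw [hst, Real.sin_add, sin2arctan, cos2arctan]
    have h1 : (1:ℝ) + (b / a) ^ 2 = (a ^ 2 + b ^ 2) / a ^ 2 := by
      field_simp
    rw [h1]
    field_simp
    linear_combination key
  rw [hDval, hsin]
  ring
end
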